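/- For every queue automaton there exists a reactive Turing machine whose process graph is branching bisimilar to the process graph of the queue automaton; hence a process is executable iff it is the process of a queue automaton. -/

import Mathlib

/-- A labelled transition system with silent action `τ` modelled as `none`. -/
structure LTS (S A : Type) where
  tr : S → Option A → S → Prop
  fin : S → Prop

/-- Zero or more τ-steps. -/
def LTS.tauStar {S A : Type} (L : LTS S A) : S → S → Prop :=
  Relation.ReflTransGen (fun s t => L.tr s none t)

/-- `s →(a) t` : either `s →a t`, or `a = τ` and `s = t`. -/
def LTS.optStep {S A : Type} (L : LTS S A) (s : S) (a : Option A) (t : S) : Prop :=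
  L.tr s a t ∨ (a = none ∧ s = t)

/-- A symmetric relation `R` is a strong bisimulation. -/
def IsStrongBisim {S A : Type} (L : LTS S A) (R : S → S → Prop) : Prop :=
  (∀ s t, R s t → R t s) ∧
  (∀ s t, R s t →
    (∀ a s', L.tr s a s' → ∃ t', L.tr t a t' ∧ R s' t') ∧
    (L.fin s → L.fin t))

/-- Strong bisimilarity: related by some strong bisimulation. -/
def Bisim {S A : Type} (L : LTS S A) (s t : S) : Prop :=
  ∃ R, IsStrongBisim L R ∧ R s t

/-- A symmetric relation `R` is a branching bisimulation. -/
def IsBranchingBisim {S A : Type} (L : LTS S A) (R : S → S → Prop) : Prop :=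
  (∀ s t, R s t → R t s) ∧
  (∀ s t, R s t →
    (∀ a s', L.tr s a s' →
      ∃ t'' t', L.tauStar t t'' ∧ L.optStep t'' a t' ∧ R s t'' ∧ R s' t') ∧
    (L.fin s → ∃ t', L.tauStar t t' ∧ L.fin t'))

/-- Branching bisimilarity: related by some branching bisimulation. -/
def BBisim {S A : Type} (L : LTS S A) (s t : S) : Prop :=
  ∃ R, IsBranchingBisim L R ∧ R s t

/-- A branching bisimulation between (the states of) two LTSs. -/
def IsBBisimSys {S₁ S₂ A : Type} (L₁ : LTS S₁ A) (L₂ : LTS S₂ A)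
    (R : S₁ → S₂ → Prop) : Prop :=
  (∀ s t, R s t →
    (∀ a s', L₁.tr s a s' →
      ∃ t'' t', L₂.tauStar t t'' ∧ L₂.optStep t'' a t' ∧ R s t'' ∧ R s' t') ∧
    (L₁.fin s → ∃ t', L₂.tauStar t t' ∧ L₂.fin t')) ∧
  (∀ s t, R s t →
    (∀ a t', L₂.tr t a t' →
      ∃ s'' s', L₁.tauStar s s'' ∧ L₁.optStep s'' a s' ∧ R s'' t ∧ R s' t') ∧
    (L₂.fin t → ∃ s', L₁.tauStar s s' ∧ L₁.fin s'))

/-- Two pointed process graphs are branching bisimilar. -/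
def BBisimSys {S₁ S₂ A : Type} (L₁ : LTS S₁ A) (s : S₁) (L₂ : LTS S₂ A) (t : S₂) : Prop :=
  ∃ R, IsBBisimSys L₁ L₂ R ∧ R s t

/-- The head condition of a queue-automaton transition: `ε`, `*`, or a datum. -/
inductive Head (D : Type) where
  | emp : Head D
  | star : Head D
  | data (d : D) : Head D

/-- A queue automaton. -/
structure QA (S A D : Type) where
  tr : S → Option A → Head D → List D → S → Prop
  init : S
  fin : S → Prop

/-- Effect of a transition with head condition `h` enqueueing `δ` on the queue
contents (head of the queue is the rightmost element, enqueueing prepends). -/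
inductive QStep {D : Type} : Head D → List D → List D → List D → Prop
  | emp (δ : List D) : QStep Head.emp δ [] δ
  | data (d : D) (δ ζ : List D) : QStep (Head.data d) δ (ζ ++ [d]) (δ ++ ζ)
  | star (δ ζ : List D) : QStep Head.star δ ζ (δ ++ ζ)

/-- The process graph of a queue automaton. -/
def QA.proc {S A D : Type} (Q : QA S A D) : LTS (S × List D) A where
  tr := fun c a c' => ∃ h δ, Q.tr c.1 a h δ c'.1 ∧ QStep h δ c.2 c'.2
  fin := fun c => Q.fin c.1

/-- The queue automaton has finitely many transitions. -/
def QA.FiniteTrans {S A D : Type} (Q : QA S A D) : Prop :=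
  Set.Finite {x : S × Option A × Head D × List D × S |
    Q.tr x.1 x.2.1 x.2.2.1 x.2.2.2.1 x.2.2.2.2}

/-- A reactive Turing machine; tape symbols are `Option D` with `none` the blank,
the `Bool` indicates the direction of the head move (`true` = right). -/
structure RTM (S A D : Type) where
  tr : S → Option A → Option D → Option D → Bool → S → Prop
  init : S
  fin : S → Prop

/-- Configurations: state, tape left of the head (nearest first), symbol under
the head, tape right of the head (nearest first); blanks at the extremes are
implicit. -/
def RTM.proc {S A D : Type} (M : RTM S A D) :
    LTS (S × List (Option D) × Option D × List (Option D)) A where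
  tr := fun c a c' => ∃ e,
    (M.tr c.1 a c.2.2.1 e false c'.1 ∧
      c'.2.1 = c.2.1.tail ∧ c'.2.2.1 = c.2.1.headD none ∧ c'.2.2.2 = e :: c.2.2.2) ∨
    (M.tr c.1 a c.2.2.1 e true c'.1 ∧
      c'.2.1 = e :: c.2.1 ∧ c'.2.2.1 = c.2.2.2.headD none ∧ c'.2.2.2 = c.2.2.2.tail)
  fin := fun c => M.fin c.1

/-- The RTM has finitely many transitions. -/
def RTM.FiniteTrans {S A D : Type} (M : RTM S A D) : Prop :=
  Set.Finite {x : S × Option A × Option D × Option D × Bool × S |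
    M.tr x.1 x.2.1 x.2.2.1 x.2.2.2.1 x.2.2.2.2.1 x.2.2.2.2.2}

namespace QRTM

variable {S A D : Type}

instance {X : Type} [Finite X] : Finite (Option X) :=
  Finite.of_equiv _ (Equiv.optionEquivSumPUnit.{0, 0} X).symm

/-- blank list -/
def Bl (xs : List (Option D)) : Prop := ∀ x ∈ xs, x = none

lemma Bl.nil : Bl ([] : List (Option D)) := by intro x h; cases h

lemma Bl.cons {xs : List (Option D)} (h : Bl xs) : Bl (none :: xs) := by
  intro x hx
  rcases List.mem_cons.1 hx with h' | h'
  · exact h'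
  · exact h x h'

lemma Bl.tail {xs : List (Option D)} (h : Bl xs) : Bl xs.tail := by
  intro x hx; exact h x (List.mem_of_mem_tail hx)

lemma Bl.headD {xs : List (Option D)} (h : Bl xs) : xs.headD none = none := by
  cases xs with
  | nil => rfl
  | cons y ys => exact h y List.mem_cons_self

lemma Bl.of_cons {x : Option D} {xs : List (Option D)} (h : Bl (x :: xs)) :
    x = none ∧ Bl xs :=
  ⟨h x List.mem_cons_self, fun y hy => h y (List.mem_cons_of_mem x hy)⟩

abbrev cells (l : List D) : List (Option D) := l.map some

abbrev Tape (D : Type) := List (Option D) × Option D × List (Option D)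

/-- machine states -/
inductive MS (S D : Type) (N : ℕ) : Type where
  | idle (s : S)
  | seek (s : S)
  | atE (s : S)
  | wr (s : S) (σ : {l : List D // l.length ≤ N})

def MS.tag {N : ℕ} : MS S D N → S
  | .idle s => s
  | .seek s => s
  | .atE s => s
  | .wr s _ => s

instance {N : ℕ} [Finite S] [Finite D] : Finite (MS S D N) := by
  have : Finite {l : List D // l.length ≤ N} := (List.finite_length_le D N).to_subtype
  exact Finite.of_injective
    (fun m => match m with
      | .idle s => Sum.inl s
      | .seek s => Sum.inr (Sum.inl s)
      | .atE s => Sum.inr (Sum.inr (Sum.inl s))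
      | .wr s σ => Sum.inr (Sum.inr (Sum.inr (s, σ))) :
        MS S D N → S ⊕ S ⊕ S ⊕ S × {l : List D // l.length ≤ N})
    (by intro a b h; cases a <;> cases b <;> simp_all)


namespace QRTM2
open QRTM

variable {S A D : Type}

/-- transitions of the simulating machine -/
inductive Mtr (Q : QA S A D) (N : ℕ) :
    MS S D N → Option A → Option D → Option D → Bool → MS S D N → Prop where
  | seekStart (s g) : Mtr Q N (.idle s) none g g true (.seek s)
  | seekStep (s d) : Mtr Q N (.seek s) none (some d) (some d) true (.seek s)
  | seekEnd (s) : Mtr Q N (.seek s) none none none false (.atE s)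
  | ret (s g) : Mtr Q N (.atE s) none g g false (.wr s ⟨[], Nat.zero_le N⟩)
  | walk (s σ d) : Mtr Q N (.wr s σ) none (some d) (some d) false (.wr s σ)
  | write (s d σ h h') :
      Mtr Q N (.wr s ⟨d :: σ, h⟩) none none (some d) false (.wr s ⟨σ, h'⟩)
  | done (s h) : Mtr Q N (.wr s ⟨[], h⟩) none none none true (.idle s)
  | star (s a δ s' g) (hδ : δ.reverse.length ≤ N) (ht : Q.tr s a .star δ s') :
      Mtr Q N (.idle s) a g g false (.wr s' ⟨δ.reverse, hδ⟩)
  | emp (s a δ s') (hδ : δ.reverse.length ≤ N) (ht : Q.tr s a .emp δ s') :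
      Mtr Q N (.idle s) a none none false (.wr s' ⟨δ.reverse, hδ⟩)
  | deq (s a d δ s') (hδ : δ.reverse.length ≤ N) (ht : Q.tr s a (.data d) δ s') :
      Mtr Q N (.atE s) a (some d) none false (.wr s' ⟨δ.reverse, hδ⟩)

def Mach (Q : QA S A D) (N : ℕ) : RTM (MS S D N) A D where
  tr := Mtr Q N
  init := .idle Q.init
  fin := fun m => Q.fin m.tag

lemma stepL {Q : QA S A D} {N : ℕ} {m m' : MS S D N} {a : Option A} {c e : Option D}
    (L R : List (Option D)) (h : Mtr Q N m a c e false m') :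
    (Mach Q N).proc.tr (m, L, c, R) a (m', L.tail, L.headD none, e :: R) :=
  ⟨e, Or.inl ⟨h, rfl, rfl, rfl⟩⟩

lemma stepR {Q : QA S A D} {N : ℕ} {m m' : MS S D N} {a : Option A} {c e : Option D}
    (L R : List (Option D)) (h : Mtr Q N m a c e true m') :
    (Mach Q N).proc.tr (m, L, c, R) a (m', e :: L, R.headD none, R.tail) :=
  ⟨e, Or.inr ⟨h, rfl, rfl, rfl⟩⟩

/-- Invariants -/
def IdleInv (l : List D) (L : List (Option D)) (c : Option D) (R : List (Option D)) : Prop :=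
  Bl L ∧ ∃ junk, Bl junk ∧ c :: R = cells l ++ junk

def SeekInv (l : List D) (L : List (Option D)) (c : Option D) (R : List (Option D)) : Prop :=
  ∃ l₁ l₂ bl junk, l = l₁ ++ l₂ ∧ Bl bl ∧ Bl junk ∧
    L = (cells l₁).reverse ++ bl ∧ c :: R = cells l₂ ++ junk

def AtEInv (l : List D) (L : List (Option D)) (c : Option D) (R : List (Option D)) : Prop :=
  ∃ l₀ bl junk, Bl bl ∧ Bl junk ∧ L = (cells l₀).reverse ++ bl ∧ R = junk ∧
    ((∃ d, l = l₀ ++ [d] ∧ c = some d) ∨ (l = [] ∧ l₀ = [] ∧ c = none))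

def WrInv (σ : List D) (l : List D) (L : List (Option D)) (c : Option D)
    (R : List (Option D)) : Prop :=
  ∃ w₁ w₂ bl junk, Bl bl ∧ Bl junk ∧ l = σ.reverse ++ w₁ ++ w₂ ∧
    ((w₂ ≠ [] ∧ L = (cells w₁).reverse ++ bl ∧ c :: R = cells w₂ ++ junk) ∨
     (w₁ = [] ∧ Bl L ∧ c = none ∧ R = cells w₂ ++ junk))

def Rel (Q : QA S A D) (N : ℕ) : (S × List D) → MS S D N × Tape D → Prop
  | p, (.idle s, L, c, R) => s = p.1 ∧ IdleInv p.2 L c R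
  | p, (.seek s, L, c, R) => s = p.1 ∧ SeekInv p.2 L c R
  | p, (.atE s, L, c, R) => s = p.1 ∧ AtEInv p.2 L c R
  | p, (.wr s σ, L, c, R) => s = p.1 ∧ WrInv σ.1 p.2 L c R

/-- shifting right over a blank-padded segment representation -/
lemma shiftR {R junk : List (Option D)} {w : List D} (hj : Bl junk)
    (hR : R = cells w ++ junk) :
    ∃ junk', Bl junk' ∧ R.headD none :: R.tail = cells w ++ junk' := by
  cases R with
  | nil =>
    have hw : cells w = [] ∧ junk = [] := List.append_eq_nil_iff.1 hR.symm
    refine ⟨[none], fun x hx => by simpa using hx, ?_⟩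
    simp [hw.1]
  | cons x R' => exact ⟨junk, hj, by simpa using hR⟩


/-! ### preservation lemmas -/

lemma idle_seek {l : List D} {L R : List (Option D)} {c : Option D}
    (h : IdleInv l L c R) : SeekInv l (c :: L) (R.headD none) R.tail := by
  obtain ⟨hL, junk, hj, hcR⟩ := h
  cases l with
  | nil =>
    simp only [cells, List.map_nil, List.nil_append] at hcR
    have hc : c = none ∧ Bl R := Bl.of_cons (hcR ▸ hj)
    obtain ⟨junk', hj', hs⟩ := shiftR hc.2 (show R = cells ([] : List D) ++ R by simp)
    exact ⟨[], [], c :: L, junk', by simp, by rw [hc.1]; exact hL.cons, hj', by simp, hs⟩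
  | cons d t =>
    simp only [cells, List.map_cons, List.cons_append, List.cons.injEq] at hcR
    obtain ⟨junk', hj', hs⟩ := shiftR hj hcR.2
    exact ⟨[d], t, L, junk', by simp, hL, hj', by simp [hcR.1], hs⟩

lemma seek_step {l : List D} {d : D} {L R : List (Option D)}
    (h : SeekInv l L (some d) R) : SeekInv l (some d :: L) (R.headD none) R.tail := by
  obtain ⟨l₁, l₂, bl, junk, hl, hbl, hj, hL, hcR⟩ := h
  cases l₂ with
  | nil =>
    simp only [cells, List.map_nil, List.nil_append] at hcR
    exact absurd (Bl.of_cons (hcR ▸ hj)).1 (by simp)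
  | cons e t =>
    simp only [cells, List.map_cons, List.cons_append, List.cons.injEq,
      Option.some.injEq] at hcR
    obtain ⟨junk', hj', hs⟩ := shiftR hj hcR.2
    refine ⟨l₁ ++ [d], t, bl, junk', by simp [hl, hcR.1], hbl, hj', by simp [hL], hs⟩

lemma seek_end {l : List D} {L R : List (Option D)}
    (h : SeekInv l L none R) : AtEInv l L.tail (L.headD none) (none :: R) := by
  obtain ⟨l₁, l₂, bl, junk, hl, hbl, hj, hL, hcR⟩ := h
  cases l₂ with
  | cons e t => simp [cells] at hcR
  | nil =>
    simp only [cells, List.map_nil, List.nil_append] at hcR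
    have hR : Bl R := (Bl.of_cons (hcR ▸ hj)).2
    cases l₁ using List.reverseRecOn with
    | nil =>
      simp only [cells, List.map_nil, List.reverse_nil, List.nil_append] at hL
      subst hL
      refine ⟨[], L.tail, none :: R, hbl.tail, hR.cons, by simp, rfl, ?_⟩
      exact Or.inr ⟨by simpa using hl, rfl, hbl.headD⟩
    | append_singleton u e =>
      have hL' : L = some e :: ((cells u).reverse ++ bl) := by simp [hL, cells]
      subst hL'
      refine ⟨u, bl, none :: R, hbl, hR.cons, by simp, rfl, ?_⟩
      exact Or.inl ⟨e, by simpa using hl, rfl⟩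

lemma atE_ret {l : List D} {L R : List (Option D)} {c : Option D}
    (h : AtEInv l L c R) : WrInv [] l L.tail (L.headD none) (c :: R) := by
  obtain ⟨l₀, bl, junk, hbl, hj, hL, hR, hc⟩ := h
  subst hR
  rcases hc with ⟨d, hl, hcd⟩ | ⟨hl, hl0, hcn⟩
  · subst hcd
    cases l₀ using List.reverseRecOn with
    | nil =>
      simp only [cells, List.map_nil, List.reverse_nil, List.nil_append] at hL
      subst hL
      refine ⟨[], [d], L.tail, R, hbl.tail, hj, by simpa using hl, ?_⟩
      exact Or.inr ⟨rfl, hbl.tail, hbl.headD, by simp⟩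
    | append_singleton u e =>
      have hL' : L = some e :: ((cells u).reverse ++ bl) := by simp [hL, cells]
      subst hL'
      refine ⟨u, [e, d], bl, R, hbl, hj, by simp [hl], ?_⟩
      exact Or.inl ⟨by simp, by simp, by simp⟩
  · subst hl0 hcn
    simp only [cells, List.map_nil, List.reverse_nil, List.nil_append] at hL
    subst hL
    refine ⟨[], [], L.tail, none :: R, hbl.tail, hj.cons, by simpa using hl, ?_⟩
    exact Or.inr ⟨rfl, hbl.tail, hbl.headD, by simp⟩

lemma wr_walk {σ l : List D} {d : D} {L R : List (Option D)}
    (h : WrInv σ l L (some d) R) : WrInv σ l L.tail (L.headD none) (some d :: R) := by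
  obtain ⟨w₁, w₂, bl, junk, hbl, hj, hl, hdisj⟩ := h
  rcases hdisj with ⟨hne, hL, hcR⟩ | ⟨_, _, hcn, _⟩
  · cases w₂ with
    | nil => exact absurd rfl hne
    | cons e t =>
      simp only [cells, List.map_cons, List.cons_append, List.cons.injEq,
        Option.some.injEq] at hcR
      obtain ⟨hed, hR⟩ := hcR
      subst hed
      cases w₁ using List.reverseRecOn with
      | nil =>
        simp only [cells, List.map_nil, List.reverse_nil, List.nil_append] at hL
        subst hL
        refine ⟨[], d :: t, L.tail, junk, hbl.tail, hj, by simpa using hl, ?_⟩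
        exact Or.inr ⟨rfl, hbl.tail, hbl.headD, by simp [hR]⟩
      | append_singleton u e' =>
        have hL' : L = some e' :: ((cells u).reverse ++ bl) := by simp [hL, cells]
        subst hL'
        refine ⟨u, e' :: d :: t, bl, junk, hbl, hj, by simp [hl], ?_⟩
        exact Or.inl ⟨by simp, by simp, by simp [hR]⟩
  · exact absurd hcn (by simp)

lemma wr_write {σ l : List D} {d : D} {L R : List (Option D)}
    (h : WrInv (d :: σ) l L none R) : WrInv σ l L.tail (L.headD none) (some d :: R) := by
  obtain ⟨w₁, w₂, bl, junk, hbl, hj, hl, hdisj⟩ := h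
  rcases hdisj with ⟨hne, hL, hcR⟩ | ⟨hw1, hBlL, _, hR⟩
  · cases w₂ with
    | nil => exact absurd rfl hne
    | cons e t => simp [cells] at hcR
  · subst hw1
    refine ⟨[], d :: w₂, bl, junk, hbl, hj, by simp [hl], ?_⟩
    exact Or.inr ⟨rfl, hBlL.tail, hBlL.headD, by simp [hR]⟩

lemma wr_done {l : List D} {L R : List (Option D)}
    (h : WrInv [] l L none R) : IdleInv l (none :: L) (R.headD none) R.tail := by
  obtain ⟨w₁, w₂, bl, junk, hbl, hj, hl, hdisj⟩ := h
  rcases hdisj with ⟨hne, hL, hcR⟩ | ⟨hw1, hBlL, _, hR⟩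
  · cases w₂ with
    | nil => exact absurd rfl hne
    | cons e t => simp [cells] at hcR
  · subst hw1
    obtain ⟨junk', hj', hs⟩ := shiftR hj hR
    exact ⟨hBlL.cons, junk', hj', by simpa [hl] using hs⟩

lemma idle_wr {l δ : List D} {L R : List (Option D)} {c : Option D}
    (h : IdleInv l L c R) :
    WrInv δ.reverse (δ ++ l) L.tail (L.headD none) (c :: R) := by
  obtain ⟨hL, junk, hj, hcR⟩ := h
  refine ⟨[], l, L.tail, junk, hL.tail, hj, by simp, ?_⟩
  exact Or.inr ⟨rfl, hL.tail, hL.headD, hcR⟩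

lemma idle_none_emp {l : List D} {L R : List (Option D)}
    (h : IdleInv l L none R) : l = [] := by
  obtain ⟨_, junk, hj, hcR⟩ := h
  cases l with
  | nil => rfl
  | cons d t => simp [cells] at hcR

lemma atE_deq {l : List D} {d : D} {δ : List D} {L R : List (Option D)}
    (h : AtEInv l L (some d) R) :
    ∃ l₀, l = l₀ ++ [d] ∧
      WrInv δ.reverse (δ ++ l₀) L.tail (L.headD none) (none :: R) := by
  obtain ⟨l₀, bl, junk, hbl, hj, hL, hR, hc⟩ := h
  subst hR
  rcases hc with ⟨d', hl, hcd⟩ | ⟨_, _, hcn⟩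
  · have hdd : d' = d := by simpa using hcd.symm
    subst hdd
    refine ⟨l₀, hl, ?_⟩
    cases l₀ using List.reverseRecOn with
    | nil =>
      simp only [cells, List.map_nil, List.reverse_nil, List.nil_append] at hL
      subst hL
      refine ⟨[], [], L.tail, none :: R, hbl.tail, hj.cons, by simp, ?_⟩
      exact Or.inr ⟨rfl, hbl.tail, hbl.headD, by simp⟩
    | append_singleton u e =>
      have hL' : L = some e :: ((cells u).reverse ++ bl) := by simp [hL, cells]
      subst hL'
      refine ⟨u, [e], bl, none :: R, hbl, hj.cons, by simp, ?_⟩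
      exact Or.inl ⟨by simp, by simp, by simp⟩
  · simp at hcn

/-! ### path lemmas -/

section Paths

variable {Q : QA S A D} {N : ℕ}

lemma wr_none_bl {σ l : List D} {L R : List (Option D)}
    (h : WrInv σ l L none R) : Bl L := by
  obtain ⟨w₁, w₂, bl, junk, hbl, hj, hl, hdisj⟩ := h
  rcases hdisj with ⟨hne, hL, hcR⟩ | ⟨_, hBlL, _, _⟩
  · cases w₂ with
    | nil => exact absurd rfl hne
    | cons e t => simp [cells] at hcR
  · exact hBlL

lemma toIdle_write (s : S) :
    ∀ (σ : List D) (h : σ.length ≤ N) (l : List D) (L R : List (Option D)),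
    WrInv σ l L none R →
    ∃ L' c' R', (Mach Q N).proc.tauStar (.wr s ⟨σ, h⟩, L, none, R) (.idle s, L', c', R') ∧
      IdleInv l L' c' R' := by
  intro σ
  induction σ with
  | nil =>
    intro h l L R hw
    exact ⟨none :: L, R.headD none, R.tail,
      Relation.ReflTransGen.single (stepR L R (Mtr.done s h)), wr_done hw⟩
  | cons d σ' ih =>
    intro h l L R hw
    have hBlL : Bl L := wr_none_bl hw
    have h' : σ'.length ≤ N := le_trans (by simp) h
    have hw' : WrInv σ' l L.tail none (some d :: R) := by
      have := wr_write hw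
      rwa [hBlL.headD] at this
    obtain ⟨L', c', R', hpath, hinv⟩ := ih h' l L.tail (some d :: R) hw'
    refine ⟨L', c', R', Relation.ReflTransGen.head ?_ hpath, hinv⟩
    have := stepL (Q := Q) (N := N) L R (Mtr.write s d σ' h h')
    rwa [hBlL.headD] at this

lemma toIdle_wr (s : S) :
    ∀ (L : List (Option D)) (σ : List D) (h : σ.length ≤ N) (l : List D)
      (c : Option D) (R : List (Option D)),
    WrInv σ l L c R →
    ∃ L' c' R', (Mach Q N).proc.tauStar (.wr s ⟨σ, h⟩, L, c, R) (.idle s, L', c', R') ∧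
      IdleInv l L' c' R' := by
  intro L
  induction L with
  | nil =>
    intro σ h l c R hw
    cases c with
    | none => exact toIdle_write s σ h l [] R hw
    | some d =>
      have hw' := wr_walk hw
      simp only [List.tail_nil, List.headD_nil] at hw'
      obtain ⟨L', c', R', hpath, hinv⟩ := toIdle_write s σ h l [] (some d :: R) hw'
      refine ⟨L', c', R', Relation.ReflTransGen.head ?_ hpath, hinv⟩
      exact stepL [] R (Mtr.walk s ⟨σ, h⟩ d)
  | cons x L₀ ih =>
    intro σ h l c R hw
    cases c with
    | none => exact toIdle_write s σ h l (x :: L₀) R hw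
    | some d =>
      have hw' := wr_walk hw
      simp only [List.tail_cons, List.headD_cons] at hw'
      obtain ⟨L', c', R', hpath, hinv⟩ := ih σ h l x (some d :: R) hw'
      refine ⟨L', c', R', Relation.ReflTransGen.head ?_ hpath, hinv⟩
      exact stepL (x :: L₀) R (Mtr.walk s ⟨σ, h⟩ d)

lemma toAtE_seek (s : S) :
    ∀ (R : List (Option D)) (l : List D) (L : List (Option D)) (c : Option D),
    SeekInv l L c R →
    ∃ L' c' R', (Mach Q N).proc.tauStar (.seek s, L, c, R) (.atE s, L', c', R') ∧
      AtEInv l L' c' R' := by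
  intro R
  induction R with
  | nil =>
    intro l L c hs
    cases c with
    | none =>
      exact ⟨L.tail, L.headD none, none :: [],
        Relation.ReflTransGen.single (stepL L [] (Mtr.seekEnd s)), seek_end hs⟩
    | some d =>
      have hs' := seek_step hs
      simp only [List.tail_nil, List.headD_nil] at hs'
      refine ⟨(some d :: L).tail, (some d :: L).headD none, none :: [],
        Relation.ReflTransGen.head (stepR L [] (Mtr.seekStep s d)) ?_, seek_end hs'⟩
      exact Relation.ReflTransGen.single (stepL (some d :: L) [] (Mtr.seekEnd s))
  | cons x R₀ ih =>
    intro l L c hs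
    cases c with
    | none =>
      exact ⟨L.tail, L.headD none, none :: (x :: R₀),
        Relation.ReflTransGen.single (stepL L (x :: R₀) (Mtr.seekEnd s)), seek_end hs⟩
    | some d =>
      have hs' := seek_step hs
      simp only [List.tail_cons, List.headD_cons] at hs'
      obtain ⟨L', c', R', hpath, hinv⟩ := ih l (some d :: L) x hs'
      exact ⟨L', c', R',
        Relation.ReflTransGen.head (stepR L (x :: R₀) (Mtr.seekStep s d)) hpath, hinv⟩

lemma toIdle_atE (s : S) (l : List D) (L : List (Option D)) (c : Option D)
    (R : List (Option D)) (h : AtEInv l L c R) :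
    ∃ L' c' R', (Mach Q N).proc.tauStar (.atE s, L, c, R) (.idle s, L', c', R') ∧
      IdleInv l L' c' R' := by
  have hw := atE_ret h
  obtain ⟨L', c', R', hpath, hinv⟩ :=
    toIdle_wr s L.tail [] (Nat.zero_le N) l (L.headD none) (c :: R) hw
  exact ⟨L', c', R',
    Relation.ReflTransGen.head (stepL L R (Mtr.ret s c)) hpath, hinv⟩

lemma toIdle_seek (s : S) (l : List D) (L : List (Option D)) (c : Option D)
    (R : List (Option D)) (h : SeekInv l L c R) :
    ∃ L' c' R', (Mach Q N).proc.tauStar (.seek s, L, c, R) (.idle s, L', c', R') ∧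
      IdleInv l L' c' R' := by
  obtain ⟨L₁, c₁, R₁, hp₁, hi₁⟩ := toAtE_seek (Q := Q) (N := N) s R l L c h
  obtain ⟨L', c', R', hp₂, hi₂⟩ := toIdle_atE s l L₁ c₁ R₁ hi₁
  exact ⟨L', c', R', Relation.ReflTransGen.trans hp₁ hp₂, hi₂⟩

lemma toAtE_idle (s : S) (l : List D) (L : List (Option D)) (c : Option D)
    (R : List (Option D)) (h : IdleInv l L c R) :
    ∃ L' c' R', (Mach Q N).proc.tauStar (.idle s, L, c, R) (.atE s, L', c', R') ∧
      AtEInv l L' c' R' := by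
  obtain ⟨L', c', R', hpath, hinv⟩ :=
    toAtE_seek (Q := Q) (N := N) s R.tail l (c :: L) (R.headD none) (idle_seek h)
  exact ⟨L', c', R',
    Relation.ReflTransGen.head (stepR L R (Mtr.seekStart s c)) hpath, hinv⟩

/-- from any related configuration we can silently reach an idle configuration -/
lemma toIdle (p : S × List D) (m : MS S D N) (L : List (Option D)) (c : Option D)
    (R : List (Option D)) (h : Rel Q N p (m, L, c, R)) :
    ∃ L' c' R', (Mach Q N).proc.tauStar (m, L, c, R) (.idle p.1, L', c', R') ∧
      IdleInv p.2 L' c' R' := by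
  cases m with
  | idle s =>
    obtain ⟨rfl, hi⟩ := h
    exact ⟨L, c, R, Relation.ReflTransGen.refl, hi⟩
  | seek s =>
    obtain ⟨rfl, hi⟩ := h
    exact toIdle_seek p.1 p.2 L c R hi
  | atE s =>
    obtain ⟨rfl, hi⟩ := h
    exact toIdle_atE p.1 p.2 L c R hi
  | wr s σ =>
    obtain ⟨rfl, hi⟩ := h
    obtain ⟨σl, hσ⟩ := σ
    exact toIdle_wr p.1 L σl hσ p.2 c R hi

end Paths

/-! ### the bisimulation -/

lemma idle_nil_none {L R : List (Option D)} {c : Option D}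
    (h : IdleInv ([] : List D) L c R) : c = none := by
  obtain ⟨_, junk, hj, hcR⟩ := h
  simp only [cells, List.map_nil, List.nil_append] at hcR
  exact (Bl.of_cons (hcR ▸ hj)).1

lemma rel_tag {Q : QA S A D} {N : ℕ} {p : S × List D} {m : MS S D N} {t : Tape D}
    (h : Rel Q N p (m, t)) : m.tag = p.1 := by
  obtain ⟨t1, t2, t3⟩ := t
  cases m <;> exact h.1

lemma fwd {Q : QA S A D} {N : ℕ}
    (hN : ∀ s a hd δ s', Q.tr s a hd δ s' → δ.length ≤ N)
    (p p' : S × List D) (a : Option A) (hstep : Q.proc.tr p a p')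
    (m : MS S D N) (L : List (Option D)) (c : Option D) (R : List (Option D))
    (hR : Rel Q N p (m, L, c, R)) :
    ∃ t'' t', (Mach Q N).proc.tauStar (m, L, c, R) t'' ∧
      (Mach Q N).proc.optStep t'' a t' ∧ Rel Q N p t'' ∧ Rel Q N p' t' := by
  obtain ⟨sp, l⟩ := p
  obtain ⟨sq, l'⟩ := p'
  obtain ⟨hd, δ, htr, hqs⟩ := hstep
  have hδ : δ.reverse.length ≤ N := by simpa using hN _ _ _ _ _ htr
  obtain ⟨L', c', R', hpath, hinv⟩ := toIdle (sp, l) m L c R hR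
  cases hqs with
  | emp =>
    have hc : c' = none := idle_nil_none hinv
    subst hc
    refine ⟨(.idle sp, L', none, R'), _, hpath,
      Or.inl (stepL L' R' (Mtr.emp sp a l' sq hδ htr)), ⟨rfl, hinv⟩, rfl, ?_⟩
    have := idle_wr (δ := l') hinv
    simpa using this
  | star =>
    refine ⟨(.idle sp, L', c', R'), _, hpath,
      Or.inl (stepL L' R' (Mtr.star sp a δ sq c' hδ htr)), ⟨rfl, hinv⟩, rfl, ?_⟩
    exact idle_wr hinv
  | data d =>
    rename_i ζ
    obtain ⟨L₂, c₂, R₂, hpath₂, hinv₂⟩ := toAtE_idle sp (ζ ++ [d]) L' c' R' hinv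
    have hc₂ : c₂ = some d := by
      obtain ⟨l₀, bl, junk, _, _, _, _, hdisj⟩ := hinv₂
      rcases hdisj with ⟨d', hl, hcd⟩ | ⟨hl, _, _⟩
      · obtain ⟨-, hdd⟩ := List.append_inj' hl rfl
        simp only [List.cons.injEq, and_true] at hdd
        rw [hcd, hdd]
      · simp at hl
    subst hc₂
    obtain ⟨l₀, hl₀, hw⟩ := atE_deq (δ := δ) hinv₂
    obtain ⟨hζ, -⟩ := List.append_inj' hl₀ rfl
    subst hζ
    refine ⟨(.atE sp, L₂, some d, R₂), _, Relation.ReflTransGen.trans hpath hpath₂,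
      Or.inl (stepL L₂ R₂ (Mtr.deq sp a d δ sq hδ htr)), ⟨rfl, hinv₂⟩, rfl, hw⟩

lemma bwd {Q : QA S A D} {N : ℕ}
    (p : S × List D) (m : MS S D N) (L : List (Option D)) (c : Option D)
    (R : List (Option D)) (a : Option A)
    (q' : MS S D N × Tape D)
    (hR : Rel Q N p (m, L, c, R))
    (hstep : (Mach Q N).proc.tr (m, L, c, R) a q') :
    ∃ s'' s', Q.proc.tauStar p s'' ∧ Q.proc.optStep s'' a s' ∧
      Rel Q N s'' (m, L, c, R) ∧ Rel Q N s' q' := by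
  obtain ⟨sp, l⟩ := p
  obtain ⟨m', L₂, c₂, R₂⟩ := q'
  obtain ⟨e, hcase⟩ := hstep
  rcases hcase with ⟨htr, hL, hc, hR2⟩ | ⟨htr, hL, hc, hR2⟩ <;>
    simp only at htr hL hc hR2 <;> subst hL hc hR2
  · -- left moves
    cases htr with
    | seekEnd s =>
      obtain ⟨rfl, hi⟩ := hR
      exact ⟨(s, l), (s, l), Relation.ReflTransGen.refl, Or.inr ⟨rfl, rfl⟩,
        ⟨rfl, hi⟩, ⟨rfl, seek_end hi⟩⟩
    | ret s g =>
      obtain ⟨rfl, hi⟩ := hR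
      exact ⟨(s, l), (s, l), Relation.ReflTransGen.refl, Or.inr ⟨rfl, rfl⟩,
        ⟨rfl, hi⟩, ⟨rfl, atE_ret hi⟩⟩
    | walk s σ d =>
      obtain ⟨rfl, hi⟩ := hR
      exact ⟨(s, l), (s, l), Relation.ReflTransGen.refl, Or.inr ⟨rfl, rfl⟩,
        ⟨rfl, hi⟩, ⟨rfl, wr_walk hi⟩⟩
    | write s d σ h h' =>
      obtain ⟨rfl, hi⟩ := hR
      exact ⟨(s, l), (s, l), Relation.ReflTransGen.refl, Or.inr ⟨rfl, rfl⟩,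
        ⟨rfl, hi⟩, ⟨rfl, wr_write hi⟩⟩
    | star s a δ s' g hδ ht =>
      obtain ⟨rfl, hi⟩ := hR
      refine ⟨(s, l), (s', δ ++ l), Relation.ReflTransGen.refl,
        Or.inl ⟨.star, δ, ht, QStep.star δ l⟩, ⟨rfl, hi⟩, ⟨rfl, idle_wr hi⟩⟩
    | emp s a δ s' hδ ht =>
      obtain ⟨rfl, hi⟩ := hR
      have hl : l = [] := idle_none_emp hi
      subst hl
      refine ⟨(s, []), (s', δ), Relation.ReflTransGen.refl,
        Or.inl ⟨.emp, δ, ht, QStep.emp δ⟩, ⟨rfl, hi⟩, ⟨rfl, ?_⟩⟩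
      have := idle_wr (δ := δ) hi
      simpa using this
    | deq s a d δ s' hδ ht =>
      obtain ⟨rfl, hi⟩ := hR
      obtain ⟨l₀, hl₀, hw⟩ := atE_deq (δ := δ) hi
      subst hl₀
      refine ⟨(s, l₀ ++ [d]), (s', δ ++ l₀), Relation.ReflTransGen.refl,
        Or.inl ⟨.data d, δ, ht, QStep.data d δ l₀⟩, ⟨rfl, hi⟩, ⟨rfl, hw⟩⟩
  · -- right moves
    cases htr with
    | seekStart s g =>
      obtain ⟨rfl, hi⟩ := hR
      exact ⟨(s, l), (s, l), Relation.ReflTransGen.refl, Or.inr ⟨rfl, rfl⟩,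
        ⟨rfl, hi⟩, ⟨rfl, idle_seek hi⟩⟩
    | seekStep s d =>
      obtain ⟨rfl, hi⟩ := hR
      exact ⟨(s, l), (s, l), Relation.ReflTransGen.refl, Or.inr ⟨rfl, rfl⟩,
        ⟨rfl, hi⟩, ⟨rfl, seek_step hi⟩⟩
    | done s h =>
      obtain ⟨rfl, hi⟩ := hR
      exact ⟨(s, l), (s, l), Relation.ReflTransGen.refl, Or.inr ⟨rfl, rfl⟩,
        ⟨rfl, hi⟩, ⟨rfl, wr_done hi⟩⟩

end QRTM2
end QRTM


/-- For every queue automaton there exists a reactive Turing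
machine whose process graph is branching bisimilar to the process graph of
the queue automaton (hence a process is executable iff it is the process of a
queue automaton). -/
theorem queue_automaton_to_rtm {S A D : Type} [Finite S] [Finite A] [Finite D]
    (Q : QA S A D) (hQ : Q.FiniteTrans) :
    ∃ (S' D' : Type) (_ : Finite S') (_ : Finite D') (M : RTM S' A D'),
      M.FiniteTrans ∧
      BBisimSys Q.proc (Q.init, []) M.proc (M.init, [], none, []) := by
  classical
  obtain ⟨N, hNb⟩ := (hQ.image (fun x => x.2.2.2.1.length)).bddAbove
  have hN : ∀ s a hd δ s', Q.tr s a hd δ s' → δ.length ≤ N := by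
    intro s a hd δ s' ht
    exact hNb ⟨(s, a, hd, δ, s'), ht, rfl⟩
  have hMfin : (QRTM.QRTM2.Mach Q N).FiniteTrans := Set.toFinite _
  refine ⟨QRTM.MS S D N, D, inferInstance, inferInstance, QRTM.QRTM2.Mach Q N,
    hMfin, QRTM.QRTM2.Rel Q N, ⟨?_, ?_⟩, ?_⟩
  · intro p t hR
    obtain ⟨m, L, c, R⟩ := t
    constructor
    · intro a p' hstep
      exact QRTM.QRTM2.fwd hN p p' a hstep m L c R hR
    · intro hfin
      refine ⟨(m, L, c, R), Relation.ReflTransGen.refl, ?_⟩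
      show Q.fin m.tag
      rw [QRTM.QRTM2.rel_tag hR]
      exact hfin
  · intro p t hR
    obtain ⟨m, L, c, R⟩ := t
    constructor
    · intro a t' hstep
      exact QRTM.QRTM2.bwd p m L c R a t' hR hstep
    · intro hfin
      refine ⟨p, Relation.ReflTransGen.refl, ?_⟩
      show Q.fin p.1
      rw [← QRTM.QRTM2.rel_tag hR]
      exact hfin
  · exact ⟨rfl, QRTM.Bl.nil, [none], by intro x hx; simpa using hx, by simp⟩
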